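/- Let φ be a perfect 2-coloring of Ci_∞(D_n) with positive outer degrees b (of black) and c (of white). For every integer i with φ(i) = φ(i+2), one has φ(i-2n+1) = φ(i+2n+1). -/

import Mathlib

/-- Neighborhood of `i` in the infinite circulant graph `Ci_∞(D_n)`,
`D_n = {±1, ±3, …, ±(2n-1)}`: the integers at odd distance less than `2n` from `i`. -/
noncomputable def nbrs (n : ℕ) (i : ℤ) : Finset ℤ :=
  (Finset.Icc (i - (2*(n:ℤ) - 1)) (i + (2*(n:ℤ) - 1))).filter (fun j => Odd (j - i))

/-- `φ` is a perfect 2-coloring of `Ci_∞(D_n)` with outer degrees `(b, c)`: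
every vertex of color 0 (black) has exactly `b` neighbors of color 1 (white), and
every vertex of color 1 has exactly `c` neighbors of color 0. -/
def Perfect2 (n : ℕ) (φ : ℤ → Fin 2) (b c : ℕ) : Prop :=
  (∀ i, φ i = 0 → ((nbrs n i).filter (fun j => φ j = 1)).card = b) ∧
  (∀ i, φ i = 1 → ((nbrs n i).filter (fun j => φ j = 0)).card = c)

lemma mem_nbrs {n : ℕ} {i j : ℤ} :
    j ∈ nbrs n i ↔ (i - (2*(n:ℤ) - 1) ≤ j ∧ j ≤ i + (2*(n:ℤ) - 1)) ∧ (j - i) % 2 = 1 := by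
  simp [nbrs, Finset.mem_filter, Finset.mem_Icc, Int.odd_iff]

lemma card_aux {φ : ℤ → Fin 2} {v : Fin 2} (A : Finset ℤ) (x : ℤ) (hx : x ∈ A) :
    (A.filter (fun j => φ j = v)).card
      = ((A.erase x).filter (fun j => φ j = v)).card + (if φ x = v then 1 else 0) := by
  rw [← Finset.insert_erase hx, Finset.filter_insert]
  split
  · rw [Finset.card_insert_of_notMem (by simp)]
    simp
  · simp

/-- If `φ(i) = φ(i+2)` then `φ(i-2n+1) = φ(i+2n+1)`. -/
theorem eq_pattern (n b c : ℕ) (hn : 0 < n) (hb : 0 < b) (hc : 0 < c)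
    (φ : ℤ → Fin 2) (hφ : Perfect2 n φ b c)
    (i : ℤ) (h : φ i = φ (i + 2)) :
    φ (i - 2*(n:ℤ) + 1) = φ (i + 2*(n:ℤ) + 1) := by
  have hn' : (1:ℤ) ≤ (n:ℤ) := by exact_mod_cast hn
  set x := i - 2*(n:ℤ) + 1 with hxdef
  set y := i + 2*(n:ℤ) + 1 with hydef
  have hxA : x ∈ nbrs n i := by
    rw [mem_nbrs]; constructor
    · omega
    · omega
  have hyB : y ∈ nbrs n (i + 2) := by
    rw [mem_nbrs]; constructor
    · omega
    · omega
  have herase : (nbrs n i).erase x = (nbrs n (i + 2)).erase y := by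
    ext j
    simp only [Finset.mem_erase, mem_nbrs]
    omega
  have key : ∀ v : Fin 2, φ i = v →
      (∀ k, φ k = v → ((nbrs n k).filter (fun j => φ j = v + 1)).card
        = ((nbrs n i).filter (fun j => φ j = v + 1)).card) →
      φ x = φ y := by
    intro v hv hcount
    have h2 : φ (i + 2) = v := h ▸ hv
    have e1 := card_aux (φ := φ) (v := v + 1) (nbrs n i) x hxA
    have e2 := card_aux (φ := φ) (v := v + 1) (nbrs n (i + 2)) y hyB
    rw [herase] at e1
    have := hcount (i + 2) h2
    rw [this] at e2
    rw [e2] at e1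
    have hiff : (φ x = v + 1) ↔ (φ y = v + 1) := by
      by_cases p : φ x = v + 1 <;> by_cases q : φ y = v + 1 <;>
        simp [p, q] at e1 ⊢ <;> omega
    exact (by decide : ∀ a b w : Fin 2, (a = w ↔ b = w) → a = b) _ _ _ hiff
  have h01 : ∀ a : Fin 2, a = 0 ∨ a = 1 := by decide
  rcases h01 (φ i) with h0 | h1
  · exact key 0 h0 (by
      intro k hk
      simp only [show (0:Fin 2) + 1 = 1 by decide]
      rw [hφ.1 k hk, hφ.1 i h0])
  · exact key 1 h1 (by
      intro k hk
      simp only [show (1:Fin 2) + 1 = 0 by decide]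
      rw [hφ.2 k hk, hφ.2 i h1])
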